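/- Let v > 0, ε ≥ 0, x ∈ ℝ^n, ξ ∈ ℝ^n, and let z ∈ P_{v,ε}(x − v(∇H(x) + ξ)). Then F(z) − F(x) ≤ −(1/(2v) − ‖A‖²)‖z − x‖² − ⟨z − x, ξ⟩ + ε. -/

import Mathlib

open scoped RealInnerProductSpace

/-- Proposition 5.1(i): for `v > 0`, `ε ≥ 0` and
`z ∈ P_{v,ε}(x - v(∇H(x) + ξ))` — an `ε`-approximate minimizer of
`y ↦ λ ∑ |y_i|^p + (1/(2v)) ‖y - (x - v(2Aᵀ(Ax - b) + ξ))‖²` — one has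
`F(z) - F(x) ≤ -(1/(2v) - ‖A‖²) ‖z - x‖² - ⟨z - x, ξ⟩ + ε`. -/
theorem stmt11 (n m : ℕ) (p lam : ℝ) (hp0 : 0 < p) (hp1 : p < 1) (hlam : 0 < lam)
    (A : EuclideanSpace ℝ (Fin n) →L[ℝ] EuclideanSpace ℝ (Fin m))
    (b : EuclideanSpace ℝ (Fin m))
    (F : EuclideanSpace ℝ (Fin n) → ℝ)
    (hF : ∀ x, F x = ‖A x - b‖ ^ 2 + lam * ∑ i, |x i| ^ p)
    (v ε : ℝ) (hv : 0 < v) (hε : 0 ≤ ε)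
    (x ξ z : EuclideanSpace ℝ (Fin n))
    (hz : ∀ y : EuclideanSpace ℝ (Fin n),
      lam * ∑ i, |z i| ^ p +
          1 / (2 * v) * ‖z - (x - v • ((2 : ℝ) • (ContinuousLinearMap.adjoint A) (A x - b) + ξ))‖ ^ 2
        ≤ ε + lam * ∑ i, |y i| ^ p +
          1 / (2 * v) * ‖y - (x - v • ((2 : ℝ) • (ContinuousLinearMap.adjoint A) (A x - b) + ξ))‖ ^ 2) :
    F z - F x ≤ -(1 / (2 * v) - ‖A‖ ^ 2) * ‖z - x‖ ^ 2 - ⟪z - x, ξ⟫ + ε := by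
  have key := hz x
  set g := (ContinuousLinearMap.adjoint A) (A x - b) with hg
  set d := z - x with hd
  have hzw : z - (x - v • ((2 : ℝ) • g + ξ)) = d + v • ((2 : ℝ) • g + ξ) := by
    rw [hd]; abel
  have hxw : x - (x - v • ((2 : ℝ) • g + ξ)) = v • ((2 : ℝ) • g + ξ) := by abel
  rw [hzw, hxw, norm_add_sq_real] at key
  have hinner : ⟪d, v • ((2 : ℝ) • g + ξ)⟫ = v * (2 * ⟪d, g⟫ + ⟪d, ξ⟫) := by
    rw [real_inner_smul_right, inner_add_right, real_inner_smul_right]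
  rw [hinner] at key
  have hAd : ‖A z - b‖ ^ 2 = ‖A d‖ ^ 2 + 2 * ⟪d, g⟫ + ‖A x - b‖ ^ 2 := by
    have h1 : A z - b = A d + (A x - b) := by rw [hd, map_sub]; abel
    have h2 : ⟪A d, A x - b⟫ = ⟪d, g⟫ := by
      rw [hg, ContinuousLinearMap.adjoint_inner_right]
    rw [h1, norm_add_sq_real, h2]
  have hop : ‖A d‖ ^ 2 ≤ ‖A‖ ^ 2 * ‖d‖ ^ 2 := by
    have h1 := A.le_opNorm d
    nlinarith [norm_nonneg (A d), norm_nonneg A, norm_nonneg d]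
  have hs : (1 / (2 * v)) * (2 * (v * (2 * ⟪d, g⟫ + ⟪d, ξ⟫)))
      = 2 * ⟪d, g⟫ + ⟪d, ξ⟫ := by
    field_simp
  have key' : lam * ∑ i, |z i| ^ p - lam * ∑ i, |x i| ^ p
      ≤ ε - (1 / (2 * v)) * ‖d‖ ^ 2 - 2 * ⟪d, g⟫ - ⟪d, ξ⟫ := by
    ring_nf at key hs ⊢
    linarith [key, hs]
  rw [hF z, hF x]
  have hexp : -(1 / (2 * v) - ‖A‖ ^ 2) * ‖d‖ ^ 2
      = ‖A‖ ^ 2 * ‖d‖ ^ 2 - (1 / (2 * v)) * ‖d‖ ^ 2 := by ring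
  linarith [key', hAd.le, hop, hexp]
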